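/- Let Φ denote the standard normal CDF, H ∈ (0,1/2), θ > 0, c = 2H√θ/σ_H for some σ_H > 0, and ν(z) = (c/(2H))·√T·((1 + z/(c√T))^{-2H} - 1) for z > -c√T. Then there exists C > 0 such that for all sufficiently large T, sup_{z > -c√T} |Φ(ν(z)) - Φ(-z)| ≤ C/√T. Equivalently, with Φ̄(x) = 1 - Φ(x), sup_{z > -c√T} |Φ̄(ν(z)) - Φ(z)| ≤ C/√T. -/

import Mathlib

open MeasureTheory Real Set Filter

noncomputable def stdNormalCDF (x : ℝ) : ℝ :=
  (∫ y in Set.Iic x, Real.exp (-y ^ 2 / 2)) / Real.sqrt (2 * Real.pi)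

lemma bern_lower {u q : ℝ} (hu : -1 < u) (hq0 : 0 < q) (hq1 : q < 1) :
    1 - q * u ≤ (1 + u) ^ (-q) := by
  have h1u : (0:ℝ) < 1 + u := by linarith
  have hb : (1 + u) ^ q ≤ 1 + q * u :=
    rpow_one_add_le_one_add_mul_self (by linarith) hq0.le hq1.le
  have hpos : 0 < (1 + u) ^ q := rpow_pos_of_pos h1u q
  rw [Real.rpow_neg h1u.le]
  rcases le_or_gt (1 - q * u) 0 with h | h
  · exact h.trans (inv_nonneg.2 hpos.le)
  · have h2 : (1 - q * u) * ((1 + u) ^ q) ≤ (1 - q * u) * (1 + q * u) :=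
      mul_le_mul_of_nonneg_left hb h.le
    have h3 : (1 - q * u) * (1 + q * u) ≤ 1 := by nlinarith [sq_nonneg (q * u)]
    calc 1 - q * u = (1 - q * u) * (1 + u) ^ q * ((1 + u) ^ q)⁻¹ := by
          field_simp
      _ ≤ 1 * ((1 + u) ^ q)⁻¹ :=
          mul_le_mul_of_nonneg_right (h2.trans h3) (inv_nonneg.2 hpos.le)
      _ = ((1 + u) ^ q)⁻¹ := one_mul _

lemma bern_upper {u q : ℝ} (hu : -(1/2) ≤ u) (hq0 : 0 < q) (hq1 : q < 1) :
    (1 + u) ^ (-q) ≤ 1 - q * u + 2 * q * u ^ 2 := by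
  have h1u : (0:ℝ) < 1 + u := by linarith
  have hbern : ((1 + u)⁻¹) ^ q ≤ 1 + q * ((1 + u)⁻¹ - 1) := by
    have h := rpow_one_add_le_one_add_mul_self
      (s := (1 + u)⁻¹ - 1) (by linarith [inv_nonneg.2 h1u.le]) hq0.le hq1.le
    simpa using h
  have hrw : (1 + u) ^ (-q) = ((1 + u)⁻¹) ^ q := by
    rw [Real.inv_rpow h1u.le, Real.rpow_neg h1u.le]
  rw [hrw]
  refine hbern.trans ?_
  have key : (1 + u)⁻¹ - 1 ≤ -u + 2 * u ^ 2 := by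
    have h1 : (1:ℝ) ≤ (1 - u + 2 * u ^ 2) * (1 + u) := by nlinarith [sq_nonneg u]
    have h2 := mul_le_mul_of_nonneg_left h1 (inv_nonneg.2 h1u.le)
    have h3 : (1 + u)⁻¹ * ((1 - u + 2 * u ^ 2) * (1 + u)) = 1 - u + 2 * u ^ 2 := by
      field_simp
    rw [h3, mul_one] at h2
    linarith
  nlinarith [mul_le_mul_of_nonneg_left key hq0.le]

lemma bern_far {u q : ℝ} (hu : 1/4 ≤ u) (hq0 : 0 < q) :
    (1 + u) ^ (-q) ≤ (5/4 : ℝ) ^ (-q) :=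
  Real.rpow_le_rpow_of_nonpos (by norm_num) (by linarith) (by linarith)

lemma gauss_integrable : Integrable (fun y : ℝ => Real.exp (-y ^ 2 / 2)) := by
  have h := integrable_exp_neg_mul_sq (b := (2:ℝ)⁻¹) (by norm_num)
  have e : ∀ y : ℝ, -(2:ℝ)⁻¹ * y ^ 2 = -y ^ 2 / 2 := fun y => by ring
  simpa [e] using h

lemma cdf_diff {a b : ℝ} (hab : a ≤ b) :
    stdNormalCDF b - stdNormalCDF a
      = (∫ y in Set.Ioc a b, Real.exp (-y ^ 2 / 2)) / Real.sqrt (2 * Real.pi) := by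
  unfold stdNormalCDF
  rw [div_sub_div_same,
    intervalIntegral.integral_Iic_sub_Iic gauss_integrable.integrableOn
      gauss_integrable.integrableOn,
    intervalIntegral.integral_of_le hab]

lemma abs_cdf_diff_le {a b : ℝ} (hab : a ≤ b) :
    |stdNormalCDF b - stdNormalCDF a| ≤ ∫ y in Set.Ioc a b, Real.exp (-y ^ 2 / 2) := by
  rw [cdf_diff hab]
  have hI : 0 ≤ ∫ y in Set.Ioc a b, Real.exp (-y ^ 2 / 2) :=
    setIntegral_nonneg measurableSet_Ioc fun y _ => (Real.exp_pos _).le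
  have h2π : (1:ℝ) ≤ Real.sqrt (2 * Real.pi) := by
    rw [show (1:ℝ) = Real.sqrt 1 by simp]
    exact Real.sqrt_le_sqrt (by nlinarith [Real.pi_gt_three])
  rw [abs_of_nonneg (div_nonneg hI (by positivity))]
  exact div_le_self hI h2π

lemma gauss_strip {a b D : ℝ} (hab : a ≤ b)
    (h : ∀ y ∈ Set.Ioc a b, Real.exp (-y ^ 2 / 2) ≤ D) :
    ∫ y in Set.Ioc a b, Real.exp (-y ^ 2 / 2) ≤ (b - a) * D := by
  have h1 : ∫ y in Set.Ioc a b, Real.exp (-y ^ 2 / 2) ≤ ∫ _ in Set.Ioc a b, D :=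
    setIntegral_mono_on gauss_integrable.integrableOn
      (integrableOn_const measure_Ioc_lt_top.ne) measurableSet_Ioc h
  have h2 : ∫ _ in Set.Ioc a b, D = (b - a) * D := by
    rw [setIntegral_const, measureReal_def, Real.volume_Ioc, smul_eq_mul,
      ENNReal.toReal_ofReal (by linarith)]
  linarith

lemma gauss_tail {m : ℝ} (hm : 0 ≤ m) :
    ∫ y in Set.Ioi m, Real.exp (-y ^ 2 / 2) ≤ Real.exp (1/2 - m) := by
  have hint : IntegrableOn (fun y : ℝ => Real.exp (1/2) * Real.exp (-1 * y)) (Set.Ioi m) :=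
    (exp_neg_integrableOn_Ioi m one_pos).const_mul _
  have h1 : ∫ y in Set.Ioi m, Real.exp (-y ^ 2 / 2)
      ≤ ∫ y in Set.Ioi m, Real.exp (1/2) * Real.exp (-1 * y) := by
    refine setIntegral_mono_on gauss_integrable.integrableOn hint measurableSet_Ioi ?_
    intro y hy
    rw [← Real.exp_add]
    apply Real.exp_le_exp.2
    have : 0 < y := lt_of_le_of_lt hm hy
    nlinarith [sq_nonneg (y - 1)]
  have h2 : ∫ y in Set.Ioi m, Real.exp (1/2) * Real.exp (-1 * y)
      = Real.exp (1/2 - m) := by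
    rw [integral_const_mul]
    have e : ∀ y : ℝ, Real.exp (-1 * y) = Real.exp (-y) := fun y => by norm_num
    simp_rw [e, integral_exp_neg_Ioi, ← Real.exp_add]
    ring_nf
  linarith

lemma gauss_tail_lower {m : ℝ} (hm : 0 ≤ m) :
    ∫ y in Set.Iic (-m), Real.exp (-y ^ 2 / 2) ≤ Real.exp (1/2 - m) := by
  have h := integral_comp_neg_Iic (-m) (fun y : ℝ => Real.exp (-y ^ 2 / 2))
  simp only [neg_sq, neg_neg] at h
  rw [show (∫ y in Set.Iic (-m), Real.exp (-y ^ 2 / 2))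
      = ∫ y in Set.Ioi m, Real.exp (-y ^ 2 / 2) from h]
  exact gauss_tail hm

set_option maxHeartbeats 1000000 in
theorem stmt17 (H θ σH : ℝ) (hH : H ∈ Set.Ioo (0:ℝ) (1/2)) (hθ : 0 < θ)
    (hσ : 0 < σH) :
    ∃ C > (0:ℝ), ∃ T₀ : ℝ, ∀ T ≥ T₀, ∀ z : ℝ,
      -(2 * H * Real.sqrt θ / σH) * Real.sqrt T < z →
      |stdNormalCDF
          ((2 * H * Real.sqrt θ / σH) / (2 * H) * Real.sqrt T *
            ((1 + z / ((2 * H * Real.sqrt θ / σH) * Real.sqrt T)) ^ (-(2 * H)) - 1))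
        - stdNormalCDF (-z)| ≤ C / Real.sqrt T := by
  obtain ⟨hH0, hH2⟩ := hH
  have hq0 : (0:ℝ) < 2 * H := by linarith
  have hq1 : 2 * H < 1 := by linarith
  have hsqθ : 0 < Real.sqrt θ := Real.sqrt_pos.2 hθ
  set c := 2 * H * Real.sqrt θ / σH with hc_def
  have hc : 0 < c := div_pos (mul_pos hq0 hsqθ) hσ
  have hδ : (5/4 : ℝ) ^ (-(2*H)) < 1 :=
    Real.rpow_lt_one_of_one_lt_of_neg (by norm_num) (by linarith)
  set δ₀ := min (1 - (5/4:ℝ) ^ (-(2*H))) (1/4) with hδ₀_def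
  have hδ₀ : 0 < δ₀ := lt_min (by linarith) (by norm_num)
  have hδ₀le : δ₀ ≤ 1/4 := min_le_right _ _
  refine ⟨16 / δ₀ / c, div_pos (div_pos (by norm_num) hδ₀) hc,
    (4 / (c * δ₀)) ^ 2 + 1, ?_⟩
  intro T hT z hz
  have hT0 : 0 < T := lt_of_lt_of_le (by positivity) hT
  have hsT : 4 / (c * δ₀) ≤ Real.sqrt T := by
    rw [show 4 / (c * δ₀) = Real.sqrt ((4 / (c * δ₀)) ^ 2) from
      (Real.sqrt_sq (le_of_lt (div_pos (by norm_num) (mul_pos hc hδ₀)))).symm]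
    exact Real.sqrt_le_sqrt (by linarith)
  set s := c * Real.sqrt T with hs_def
  have hs0 : 0 < s := mul_pos hc (Real.sqrt_pos.2 hT0)
  have hsne : s ≠ 0 := hs0.ne'
  have hqne : (2*H) ≠ 0 := hq0.ne'
  have hδ₀s : 4 ≤ δ₀ * s := by
    have h := mul_le_mul_of_nonneg_left hsT (mul_pos hc hδ₀).le
    rw [mul_div_cancel₀ _ (mul_pos hc hδ₀).ne'] at h
    calc (4:ℝ) ≤ c * δ₀ * Real.sqrt T := h
      _ = δ₀ * s := by rw [hs_def]; ring
  have hs16 : 16 ≤ s := by nlinarith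
  have hzs : -s < z := by rw [hs_def, ← neg_mul]; exact hz
  rw [show c / (2*H) * Real.sqrt T = s / (2*H) from by rw [hs_def]; ring,
    show (16:ℝ)/δ₀/c/Real.sqrt T = 16/δ₀/s from by rw [hs_def, div_div]]
  set ν := s / (2*H) * ((1 + z/s) ^ (-(2*H)) - 1) with hν_def
  have hδ₀d : δ₀ ≤ 1 - (5/4:ℝ) ^ (-(2*H)) := min_le_left _ _
  clear_value ν s δ₀ c
  have hu : -1 < z / s := by rw [lt_div_iff₀ hs0]; linarith
  have hlow : -z ≤ ν := by
    have h1 := bern_lower (q := 2*H) hu hq0 hq1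
    have h2 : (1 - 2*H*(z/s)) - 1 ≤ (1 + z/s) ^ (-(2*H)) - 1 := by linarith
    have h3 := mul_le_mul_of_nonneg_left h2 (div_pos hs0 hq0).le
    have h4 : s/(2*H) * ((1 - 2*H*(z/s)) - 1) = -z := by field_simp; ring
    rw [hν_def]; linarith
  rcases le_or_gt z (s/4) with hz4 | hz4
  · rcases le_or_gt (-(s/4)) z with hz4' | hz4'
    · -- middle region |z| ≤ s/4
      have hum : -(1/2) ≤ z / s := by rw [le_div_iff₀ hs0]; linarith
      have h1 := bern_upper (q := 2*H) hum hq0 hq1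
      have hup : ν ≤ -z + 2 * z^2 / s := by
        have h2 : (1 + z/s) ^ (-(2*H)) - 1
            ≤ (1 - 2*H*(z/s) + 2*(2*H)*(z/s)^2) - 1 := by linarith
        have h3 := mul_le_mul_of_nonneg_left h2 (div_pos hs0 hq0).le
        have h4 : s/(2*H) * ((1 - 2*H*(z/s) + 2*(2*H)*(z/s)^2) - 1)
            = -z + 2*z^2/s := by field_simp; ring
        rw [hν_def]; linarith
      have hdb : ∀ y ∈ Set.Ioc (-z) ν, Real.exp (-y^2/2) ≤ Real.exp (-z^2/8) := by
        intro y hy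
        apply Real.exp_le_exp.2
        rcases le_or_gt 0 z with hz0 | hz0
        · have h2 : 2*z^2/s ≤ z/2 := by rw [div_le_iff₀ hs0]; nlinarith
          have hy2 : y ≤ -(z/2) := by linarith [hy.2]
          nlinarith [mul_nonneg (by linarith : (0:ℝ) ≤ -(y + z/2))
            (by linarith : (0:ℝ) ≤ z/2 - y)]
        · have hy1 : -z < y := hy.1
          nlinarith [mul_self_le_mul_self (by linarith : (0:ℝ) ≤ -z) hy1.le]
      have hint1 : |stdNormalCDF ν - stdNormalCDF (-z)|
          ≤ (ν - -z) * Real.exp (-z^2/8) :=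
        (abs_cdf_diff_le hlow).trans (gauss_strip hlow hdb)
      have he : 2*z^2 * Real.exp (-z^2/8) ≤ 16 := by
        rw [show -z^2/8 = -(z^2/8) from by ring, Real.exp_neg]
        have h5 : 2*z^2 ≤ 16 * Real.exp (z^2/8) := by
          nlinarith [Real.add_one_le_exp (z^2/8)]
        calc 2*z^2 * (Real.exp (z^2/8))⁻¹
            ≤ 16 * Real.exp (z^2/8) * (Real.exp (z^2/8))⁻¹ :=
              mul_le_mul_of_nonneg_right h5 (inv_nonneg.2 (Real.exp_pos (z^2/8)).le)
          _ = 16 := by field_simp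
      have hstep : (ν - -z) * Real.exp (-z^2/8) ≤ 16 / s := by
        have h7 : ν - -z ≤ 2*z^2/s := by linarith
        have h8 := mul_le_mul_of_nonneg_right h7 (Real.exp_pos (-z^2/8)).le
        have h9 : 2*z^2/s * Real.exp (-z^2/8) ≤ 16/s := by
          rw [div_mul_eq_mul_div, div_le_div_iff₀ hs0 hs0]
          nlinarith [mul_le_mul_of_nonneg_right he hs0.le]
        linarith
      have hfinal : (16:ℝ)/s ≤ 16/δ₀/s := by
        refine (div_le_div_iff_of_pos_right hs0).2 ?_
        rw [le_div_iff₀ hδ₀]; nlinarith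
      linarith
    · -- z < -s/4 : both points in upper tail
      have hm : (0:ℝ) ≤ s/4 := by linarith
      have hsub : Set.Ioc (-z) ν ⊆ Set.Ioi (s/4) := by
        intro y hy
        simp only [Set.mem_Ioi]
        linarith [hy.1]
      have h1 := (abs_cdf_diff_le hlow).trans
        (setIntegral_mono_set gauss_integrable.integrableOn
          (Filter.Eventually.of_forall fun y => (Real.exp_pos _).le)
          hsub.eventuallyLE)
      have h2 := gauss_tail hm
      have h3 : Real.exp (1/2 - s/4) ≤ 16/δ₀/s := by
        have ha : Real.exp (1/2 - s/4) ≤ Real.exp (-(s/8)) :=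
          Real.exp_le_exp.2 (by linarith)
        have hb : Real.exp (-(s/8)) ≤ 8/s := by
          rw [Real.exp_neg]
          calc (Real.exp (s/8))⁻¹ ≤ (s/8)⁻¹ :=
                inv_anti₀ (by linarith)
                  (by linarith [Real.add_one_le_exp (s/8)])
            _ = 8/s := by rw [inv_div]
        have hcmp : (8:ℝ)/s ≤ 16/δ₀/s := by
          refine (div_le_div_iff_of_pos_right hs0).2 ?_
          rw [le_div_iff₀ hδ₀]; nlinarith
        linarith
      linarith
  · -- z > s/4 : both points in lower tail
    have huf : 1/4 ≤ z/s := by rw [le_div_iff₀ hs0]; linarith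
    have h1 := bern_far (q := 2*H) huf hq0
    have hfar : ν ≤ -(δ₀ * s) := by
      have h2 : (1 + z/s) ^ (-(2*H)) - 1 ≤ -δ₀ := by linarith [hδ₀d]
      have h3 := mul_le_mul_of_nonneg_left h2 (div_pos hs0 hq0).le
      have h4 : δ₀ * s ≤ δ₀ * s / (2*H) := by
        rw [le_div_iff₀ hq0]; nlinarith [mul_pos hδ₀ hs0]
      have h5 : s/(2*H) * (-δ₀) = -(δ₀*s/(2*H)) := by ring
      rw [hν_def]; linarith
    have hsub : Set.Ioc (-z) ν ⊆ Set.Iic (-(δ₀*s)) := fun y hy => le_trans hy.2 hfar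
    have h2 := (abs_cdf_diff_le hlow).trans
      (setIntegral_mono_set gauss_integrable.integrableOn
        (Filter.Eventually.of_forall fun y => (Real.exp_pos _).le)
        hsub.eventuallyLE)
    have h3 := gauss_tail_lower (m := δ₀*s) (mul_pos hδ₀ hs0).le
    have h4 : Real.exp (1/2 - δ₀*s) ≤ 16/δ₀/s := by
      have ha : Real.exp (1/2 - δ₀*s) ≤ Real.exp (-(δ₀*s/2)) :=
        Real.exp_le_exp.2 (by linarith)
      have hb : Real.exp (-(δ₀*s/2)) ≤ 2/(δ₀*s) := by
        rw [Real.exp_neg]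
        calc (Real.exp (δ₀*s/2))⁻¹ ≤ (δ₀*s/2)⁻¹ :=
              inv_anti₀ (by linarith)
                (by linarith [Real.add_one_le_exp (δ₀*s/2)])
          _ = 2/(δ₀*s) := by rw [inv_div]
      have hcmp : 2/(δ₀*s) ≤ 16/δ₀/s := by
        rw [div_div]
        exact (div_le_div_iff_of_pos_right (mul_pos hδ₀ hs0)).2 (by norm_num)
      linarith
    linarith
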